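/- Let A be a square matrix with real entries. Then trace(A^l) ≥ 0 for infinitely many positive integers l. -/

import Mathlib

open Real Set Filter Finset Module LinearMap


lemma aux_kron {ι : Type*} [Finite ι] (θ : ι → ℝ) :
    {l : ℕ | 0 < l ∧ ∀ i, (1:ℝ)/2 ≤ Real.cos (l * θ i)}.Infinite := by
  classical
  set α : ι → ℝ := fun i => θ i / (2 * π) with hα
  have hcell : ∀ x : ℝ, (⌊Int.fract x * 7⌋).toNat < 7 := by
    intro x
    have h0 : (0:ℝ) ≤ Int.fract x * 7 := by
      have := Int.fract_nonneg x; nlinarith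
    have h1 : Int.fract x * 7 < 7 := by nlinarith [Int.fract_lt_one x]
    have h2 : ⌊Int.fract x * 7⌋ < 7 := by
      exact_mod_cast Int.floor_lt.mpr (by exact_mod_cast h1)
    omega
  set F : ℕ → ι → Fin 7 := fun l i => ⟨(⌊Int.fract (l * α i) * 7⌋).toNat, hcell _⟩ with hF
  obtain ⟨c, hc⟩ := Finite.exists_infinite_fiber F
  have hS : (F ⁻¹' {c}).Infinite := Set.infinite_coe_iff.mp hc
  apply Set.infinite_of_forall_exists_gt
  intro M
  obtain ⟨a, ha, -⟩ := hS.exists_gt 0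
  obtain ⟨b, hb, hab⟩ := hS.exists_gt (a + M)
  have hable : a ≤ b := by omega
  refine ⟨b - a, ⟨by omega, ?_⟩, by omega⟩
  intro i
  -- same cell
  have hfib : F b i = F a i := by
    have h1 : F b = c := hb
    have h2 : F a = c := ha
    rw [h1, h2]
  have hfloor : ⌊Int.fract (b * α i) * 7⌋ = ⌊Int.fract (a * α i) * 7⌋ := by
    have h1 := congrArg Fin.val hfib
    simp only [F] at h1
    have hb0 : (0:ℤ) ≤ ⌊Int.fract ((b:ℝ) * α i) * 7⌋ := by
      apply Int.floor_nonneg.mpr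
      have := Int.fract_nonneg ((b:ℝ) * α i); nlinarith
    have ha0 : (0:ℤ) ≤ ⌊Int.fract ((a:ℝ) * α i) * 7⌋ := by
      apply Int.floor_nonneg.mpr
      have := Int.fract_nonneg ((a:ℝ) * α i); nlinarith
    omega
  -- fract difference small
  have hdiff : |Int.fract (b * α i) - Int.fract (a * α i)| < 1/7 := by
    set j := ⌊Int.fract ((b:ℝ) * α i) * 7⌋ with hj
    have h1 : (j:ℝ) ≤ Int.fract ((b:ℝ) * α i) * 7 := Int.floor_le _
    have h2 : Int.fract ((b:ℝ) * α i) * 7 < j + 1 := Int.lt_floor_add_one _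
    have h3 : (j:ℝ) ≤ Int.fract ((a:ℝ) * α i) * 7 := by rw [hfloor]; exact Int.floor_le _
    have h4 : Int.fract ((a:ℝ) * α i) * 7 < j + 1 := by rw [hfloor]; exact Int.lt_floor_add_one _
    rw [abs_lt]; constructor <;> nlinarith
  set k : ℤ := ⌊(b:ℝ) * α i⌋ - ⌊(a:ℝ) * α i⌋ with hk
  have hsub : ((b - a : ℕ) : ℝ) * α i - k = Int.fract ((b:ℝ) * α i) - Int.fract ((a:ℝ) * α i) := by
    rw [Nat.cast_sub hable]
    unfold Int.fract
    push_cast [hk]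
    ring
  have hbound : |((b - a : ℕ) : ℝ) * θ i - 2 * π * k| ≤ 1 := by
    have h2pi : ((b - a : ℕ) : ℝ) * θ i - 2 * π * k = (2 * π) * (((b - a : ℕ) : ℝ) * α i - k) := by
      simp only [hα]
      have h2 : (2*π) ≠ 0 := by positivity
      rw [mul_sub]; congr 1; field_simp
    rw [h2pi, abs_mul, hsub]
    have hpi : |2 * π| ≤ 7 := by
      rw [abs_of_pos (by positivity)]
      nlinarith [Real.pi_lt_d2]
    calc |2 * π| * |Int.fract ((b:ℝ) * α i) - Int.fract ((a:ℝ) * α i)| ≤ 7 * (1/7) := by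
          apply mul_le_mul hpi hdiff.le (abs_nonneg _) (by norm_num)
      _ = 1 := by norm_num
  -- conclude cos ≥ 1/2
  have hcos : Real.cos (((b - a : ℕ) : ℝ) * θ i) = Real.cos (((b - a : ℕ) : ℝ) * θ i - k * (2 * π)) :=
    (Real.cos_sub_int_mul_two_pi _ k).symm
  rw [hcos]
  set y := ((b - a : ℕ) : ℝ) * θ i - k * (2 * π) with hy
  clear_value y
  have hy1 : |y| ≤ 1 := by rw [hy]; convert hbound using 2; ring
  have := Real.one_sub_sq_div_two_le_cos (x := y)
  have hysq : y ^ 2 ≤ 1 := by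
    have h6 := abs_nonneg y
    nlinarith [sq_abs y]
  have h7 : (1:ℝ)/2 ≤ 1 - y ^ 2 / 2 := by linarith
  linarith

lemma aux_key {ι : Type*} [Fintype ι] (z : ι → ℂ) (c : ι → ℕ) (hc : ∀ i, 0 < c i) :
    {l : ℕ | 0 < l ∧ 0 ≤ (∑ i, (c i : ℂ) * z i ^ l).re}.Infinite := by
  classical
  by_cases hz : ∀ i, z i = 0
  · refine Set.Infinite.mono ?_ (Set.Ioi_infinite 0)
    intro l hl
    refine ⟨hl, ?_⟩
    have : ∀ i, z i ^ l = 0 := fun i => by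
      rw [hz i]; exact zero_pow (Set.mem_Ioi.mp hl).ne'
    simp [this]
  · push_neg at hz
    obtain ⟨i0, hi0⟩ := hz
    have hne : Nonempty ι := ⟨i0⟩
    have huniv : (Finset.univ : Finset ι).Nonempty := Finset.univ_nonempty
    set ρ : ℝ := Finset.univ.sup' huniv (fun i => ‖z i‖) with hρ
    have hle : ∀ i, ‖z i‖ ≤ ρ := fun i => by
      rw [hρ]; exact Finset.le_sup' (fun i => ‖z i‖) (Finset.mem_univ i)
    have hρ0 : 0 < ρ :=
      lt_of_lt_of_le (norm_pos_iff.mpr hi0) (hle i0)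
    obtain ⟨im, -, him⟩ := Finset.exists_mem_eq_sup' huniv (fun i => ‖z i‖)
    set T : Finset ι := Finset.univ.filter (fun i => ¬ ‖z i‖ = ρ) with hT
    set F : ℕ → ℝ := fun l => ∑ i ∈ T, (c i : ℝ) * (‖z i‖ / ρ) ^ l with hF
    have hFt : Tendsto F atTop (nhds 0) := by
      have h0 : (0:ℝ) = ∑ i ∈ T, (0:ℝ) := by simp
      rw [hF, h0]
      refine tendsto_finset_sum _ (fun i hi => ?_)
      have hlt : ‖z i‖ / ρ < 1 := by
        rw [div_lt_one hρ0]
        exact lt_of_le_of_ne (hle i) (by simpa [hT] using hi)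
      have h1 : Tendsto (fun l : ℕ => (‖z i‖ / ρ) ^ l) atTop (nhds 0) :=
        tendsto_pow_atTop_nhds_zero_of_lt_one (div_nonneg (norm_nonneg _) hρ0.le) hlt
      simpa using h1.const_mul ((c i : ℝ))
    have hev : ∀ᶠ l in atTop, F l < 1/2 :=
      hFt.eventually_lt_const (by norm_num)
    obtain ⟨L, hL⟩ := eventually_atTop.mp hev
    have hG := aux_kron (fun i => Complex.arg (z i))
    refine Set.Infinite.mono ?_ (hG.diff (Set.finite_Iio L))
    rintro l ⟨⟨hl0, hlcos⟩, hlL⟩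
    simp only [Set.mem_Iio, not_lt] at hlL
    refine ⟨hl0, ?_⟩
    have hre : (∑ i, (c i : ℂ) * z i ^ l).re = ∑ i, (c i : ℝ) * (z i ^ l).re := by
      rw [Complex.re_sum]
      exact Finset.sum_congr rfl fun i _ => by simp [Complex.mul_re]
    rw [hre, ← Finset.sum_filter_add_sum_filter_not Finset.univ
      (fun i => ‖z i‖ = ρ)]
    have hApart : (ρ ^ l) / 2 ≤
        ∑ i ∈ Finset.univ.filter (fun i => ‖z i‖ = ρ),
          (c i : ℝ) * (z i ^ l).re := by
      have hmem : im ∈ Finset.univ.filter (fun i => ‖z i‖ = ρ) := by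
        simp [hρ, him.symm]
      have hcard : 1 ≤ (Finset.univ.filter (fun i => ‖z i‖ = ρ)).card :=
        Finset.card_pos.mpr ⟨im, hmem⟩
      have hterm : ∀ i ∈ Finset.univ.filter (fun i => ‖z i‖ = ρ),
          (ρ ^ l) / 2 ≤ (c i : ℝ) * (z i ^ l).re := by
        intro i hi
        have hiρ : ‖z i‖ = ρ := by simpa using hi
        have hrew : (z i ^ l).re = ‖z i‖ ^ l * Real.cos (l * Complex.arg (z i)) := by
          conv_lhs => rw [← Complex.norm_mul_exp_arg_mul_I (z i)]
          rw [mul_pow, ← Complex.exp_nat_mul, ← Complex.ofReal_pow]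
          have : (l : ℂ) * (Complex.arg (z i) * Complex.I)
              = (↑((l : ℝ) * Complex.arg (z i))) * Complex.I := by push_cast; ring
          rw [this, Complex.re_ofReal_mul, Complex.exp_ofReal_mul_I_re]
        have hcos := hlcos i
        have hc1 : (1:ℝ) ≤ (c i : ℝ) := by exact_mod_cast hc i
        have hρp : (0:ℝ) < ρ ^ l := by positivity
        rw [hrew, hiρ]
        have h2 : ρ ^ l / 2 ≤ ρ ^ l * Real.cos (l * Complex.arg (z i)) := by nlinarith
        have h3 : 1 * (ρ ^ l * Real.cos (l * Complex.arg (z i)))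
            ≤ (c i : ℝ) * (ρ ^ l * Real.cos (l * Complex.arg (z i))) :=
          mul_le_mul_of_nonneg_right hc1 (by nlinarith)
        linarith
      calc (ρ ^ l) / 2 = 1 * ((ρ ^ l)/2) := by ring
        _ ≤ ((Finset.univ.filter (fun i => ‖z i‖ = ρ)).card : ℝ) * ((ρ ^ l)/2) := by
            apply mul_le_mul_of_nonneg_right (by exact_mod_cast hcard) (by positivity)
        _ ≤ _ := by
            have := Finset.card_nsmul_le_sum
              (Finset.univ.filter (fun i => ‖z i‖ = ρ))
              (fun i => (c i : ℝ) * (z i ^ l).re) ((ρ ^ l)/2) hterm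
            simpa [nsmul_eq_mul] using this
    have hBpart : -(ρ ^ l * F l) ≤
        ∑ i ∈ Finset.univ.filter (fun i => ¬ ‖z i‖ = ρ),
          (c i : ℝ) * (z i ^ l).re := by
      have : ρ ^ l * F l = ∑ i ∈ T, (c i : ℝ) * ‖z i‖ ^ l := by
        rw [hF, Finset.mul_sum]
        refine Finset.sum_congr rfl fun i hi => ?_
        rw [div_pow]
        have hρl : (ρ:ℝ)^l ≠ 0 := by positivity
        field_simp
      rw [this, ← Finset.sum_neg_distrib]
      refine Finset.sum_le_sum fun i hi => ?_
      have h1 : -(‖z i‖ ^ l) ≤ (z i ^ l).re := by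
        have := Complex.abs_re_le_norm (z i ^ l)
        have h2 := abs_le.mp this
        rw [norm_pow] at h2
        exact h2.1
      have hc0 : (0:ℝ) ≤ (c i : ℝ) := by positivity
      nlinarith
    have hFl : F l < 1/2 := hL l hlL
    have hρp : (0:ℝ) < ρ ^ l := by positivity
    nlinarith

lemma aux_trace_restrict {V : Type*} [AddCommGroup V] [Module ℂ V] [FiniteDimensional ℂ V]
    (f : Module.End ℂ V) (μ : ℂ) (l : ℕ)
    (h : MapsTo (f ^ l) (f.maxGenEigenspace μ) (f.maxGenEigenspace μ)) :
    trace ℂ _ ((f ^ l).restrict h) = (Module.finrank ℂ (f.maxGenEigenspace μ) : ℂ) * μ ^ l := by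
  have hmap : MapsTo f (f.maxGenEigenspace μ) (f.maxGenEigenspace μ) :=
    f.mapsTo_maxGenEigenspace_of_comm rfl μ
  set W := f.maxGenEigenspace μ with hW
  set g : Module.End ℂ W := f.restrict hmap with hg
  have h1 : (f ^ l).restrict h = g ^ l := (Module.End.pow_restrict l hmap h).symm
  set C : Module.End ℂ W := algebraMap ℂ _ μ with hC
  set N : Module.End ℂ W := g - C with hNdef
  have hN : IsNilpotent N := by
    obtain ⟨m, hm⟩ := Module.End.isNilpotent_restrict_maxGenEigenspace_sub_algebraMap f μ
    refine ⟨m, ?_⟩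
    have hEq : N = (f - algebraMap ℂ (Module.End ℂ V) μ).restrict
        (Module.End.mapsTo_maxGenEigenspace_of_comm
          (Algebra.mul_sub_algebraMap_commutes f μ) μ) := by
      ext x
      simp [hNdef, hg, hC, LinearMap.restrict_apply, Module.algebraMap_end_apply]
      rfl
    rw [hEq]
    exact hm
  have hgCN : g = C + N := by rw [hNdef]; abel
  have hcomm : Commute C N := Algebra.commute_algebraMap_left μ N
  rw [h1, hgCN, Commute.add_pow hcomm, map_sum]
  rw [Finset.sum_eq_single l]
  · have h2 : C ^ l * N ^ (l - l) * (l.choose l : Module.End ℂ W) = C ^ l := by simp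
    rw [h2, hC, ← map_pow, Module.algebraMap_end_eq_smul_id, map_smul, trace_id]
    simp [mul_comm]
  · intro k hk hkl
    have hlk : l - k ≠ 0 := by
      simp only [Finset.mem_range] at hk; omega
    have hnil : IsNilpotent (C ^ k * N ^ (l - k) * (l.choose k : Module.End ℂ W)) := by
      apply Commute.isNilpotent_mul_right (Nat.commute_cast _ _)
      exact Commute.isNilpotent_mul_left
        ((Algebra.commute_algebraMap_left μ N).pow_pow k (l - k)) (hN.pow_of_pos hlk)
    exact (LinearMap.isNilpotent_trace_of_isNilpotent hnil).eq_zero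
  · intro h; simp at h

lemma aux_trace_pow {V : Type*} [AddCommGroup V] [Module ℂ V] [FiniteDimensional ℂ V]
    (f : Module.End ℂ V) :
    ∃ (T : Finset ℂ) (c : ℂ → ℕ), (∀ μ ∈ T, 0 < c μ) ∧
      ∀ l, LinearMap.trace ℂ V (f ^ l) = ∑ μ ∈ T, (c μ : ℂ) * μ ^ l := by
  classical
  have h_fin : {μ : ℂ | f.maxGenEigenspace μ ≠ ⊥}.Finite :=
    WellFoundedGT.finite_ne_bot_of_iSupIndep f.independent_maxGenEigenspace
  have hds := DirectSum.isInternal_submodule_of_iSupIndep_of_iSup_eq_top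
      f.independent_maxGenEigenspace f.iSup_maxGenEigenspace_eq_top
  refine ⟨h_fin.toFinset, fun μ => Module.finrank ℂ (f.maxGenEigenspace μ), ?_, ?_⟩
  · intro μ hμ
    rw [Set.Finite.mem_toFinset] at hμ
    have : Nontrivial (f.maxGenEigenspace μ) := Submodule.nontrivial_iff_ne_bot.mpr hμ
    exact Module.finrank_pos
  · intro l
    have hfl : ∀ μ : ℂ, Set.MapsTo (f ^ l) (f.maxGenEigenspace μ) (f.maxGenEigenspace μ) :=
      fun μ => f.mapsTo_maxGenEigenspace_of_comm (Commute.pow_right rfl l) μ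
    rw [LinearMap.trace_eq_sum_trace_restrict' hds h_fin hfl]
    exact Finset.sum_congr rfl fun μ _ => aux_trace_restrict f μ l (hfl μ)

lemma aux_matrix_trace {n : ℕ} (M : Matrix (Fin n) (Fin n) ℂ) :
    LinearMap.trace ℂ (Fin n → ℂ) (Matrix.toLinAlgEquiv' M) = M.trace := by
  rw [LinearMap.trace_eq_matrix_trace ℂ (Pi.basisFun ℂ (Fin n)), LinearMap.toMatrix_eq_toMatrix']
  congr 1
  exact LinearMap.toMatrix'_toLin' M

/-- For any real square matrix `A`, the trace of `A^l` is nonnegative for infinitely many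
positive integers `l`. -/
theorem stmt_10 {n : ℕ} (A : Matrix (Fin n) (Fin n) ℝ) :
    {l : ℕ | 0 < l ∧ 0 ≤ Matrix.trace (A ^ l)}.Infinite := by
  classical
  set B : Matrix (Fin n) (Fin n) ℂ := A.map Complex.ofReal with hB
  set f : Module.End ℂ (Fin n → ℂ) := Matrix.toLinAlgEquiv' B with hf
  obtain ⟨T, c, hc, htr⟩ := aux_trace_pow f
  have key : ∀ l : ℕ, ((Matrix.trace (A ^ l) : ℝ) : ℂ) = ∑ μ ∈ T, (c μ : ℂ) * μ ^ l := by
    intro l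
    rw [← htr l]
    have h1 : f ^ l = Matrix.toLinAlgEquiv' (B ^ l) := by rw [hf, ← map_pow]
    have h2 : B ^ l = (A ^ l).map Complex.ofReal := by
      have h3 : A.map Complex.ofReal = (Complex.ofRealHom.mapMatrix A) := rfl
      rw [hB, h3, ← map_pow]; rfl
    rw [h1, aux_matrix_trace, h2]
    simp [Matrix.trace, Matrix.map_apply, Matrix.diag]
  have hinf := aux_key (ι := {μ // μ ∈ T}) (fun μ => (μ : ℂ)) (fun μ => c μ)
    (fun μ => hc μ μ.2)
  refine Set.Infinite.mono ?_ hinf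
  rintro l ⟨hl0, hlre⟩
  refine ⟨hl0, ?_⟩
  have hsum : (∑ μ : {μ // μ ∈ T}, (c μ : ℂ) * (μ : ℂ) ^ l) = ∑ μ ∈ T, (c μ : ℂ) * μ ^ l := by
    rw [← Finset.sum_coe_sort T (fun μ => (c μ : ℂ) * μ ^ l)]
  rw [hsum, ← key l, Complex.ofReal_re] at hlre
  exact hlre
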